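/- The 2-dimensional Lebesgue measure of the set of pairs (s,t) in the unit square [0,1]² for which the three lengths min(s,t), |s-t| and 1-max(s,t) satisfy the strict triangle inequality (each length is strictly less than the sum of the other two) equals 1/4. -/

import Mathlib

open MeasureTheory

theorem broken_stick_triangle_prob :
    volume {p : ℝ × ℝ | p.1 ∈ Set.Icc (0:ℝ) 1 ∧ p.2 ∈ Set.Icc (0:ℝ) 1 ∧
      min p.1 p.2 < |p.1 - p.2| + (1 - max p.1 p.2) ∧
      |p.1 - p.2| < min p.1 p.2 + (1 - max p.1 p.2) ∧
      1 - max p.1 p.2 < min p.1 p.2 + |p.1 - p.2|} = 1 / 4 := by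
  have hset : {p : ℝ × ℝ | p.1 ∈ Set.Icc (0:ℝ) 1 ∧ p.2 ∈ Set.Icc (0:ℝ) 1 ∧
      min p.1 p.2 < |p.1 - p.2| + (1 - max p.1 p.2) ∧
      |p.1 - p.2| < min p.1 p.2 + (1 - max p.1 p.2) ∧
      1 - max p.1 p.2 < min p.1 p.2 + |p.1 - p.2|} =
      regionBetween (fun _ => (1/2 : ℝ)) (fun x => x + 1/2) (Set.Ioo 0 (1/2)) ∪
      regionBetween (fun x => x - 1/2) (fun _ => (1/2 : ℝ)) (Set.Ioo (1/2) 1) := by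
    ext ⟨x, y⟩
    simp only [Set.mem_setOf_eq, Set.mem_union, regionBetween, Set.mem_Ioo, Set.mem_Icc]
    constructor
    · rintro ⟨⟨hx0, hx1⟩, ⟨hy0, hy1⟩, h1, h2, h3⟩
      rcases le_total x y with h | h
      · rw [min_eq_left h, max_eq_right h, abs_of_nonpos (by linarith)] at h1 h2 h3
        left
        exact ⟨⟨by linarith, by linarith⟩, by linarith, by linarith⟩
      · rw [min_eq_right h, max_eq_left h, abs_of_nonneg (by linarith)] at h1 h2 h3
        right
        exact ⟨⟨by linarith, by linarith⟩, by linarith, by linarith⟩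
    · rintro (⟨⟨hx0, hx1⟩, hy1, hy2⟩ | ⟨⟨hx0, hx1⟩, hy1, hy2⟩)
      · have h : x ≤ y := by linarith
        rw [min_eq_left h, max_eq_right h, abs_of_nonpos (by linarith)]
        exact ⟨⟨by linarith, by linarith⟩, ⟨by linarith, by linarith⟩,
          by linarith, by linarith, by linarith⟩
      · have h : y ≤ x := by linarith
        rw [min_eq_right h, max_eq_left h, abs_of_nonneg (by linarith)]
        exact ⟨⟨by linarith, by linarith⟩, ⟨by linarith, by linarith⟩,
          by linarith, by linarith, by linarith⟩
  rw [hset]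
  have hd : Disjoint
      (regionBetween (fun _ => (1/2 : ℝ)) (fun x => x + 1/2) (Set.Ioo 0 (1/2)))
      (regionBetween (fun x => x - 1/2) (fun _ => (1/2 : ℝ)) (Set.Ioo (1/2) 1)) := by
    rw [Set.disjoint_left]
    rintro ⟨x, y⟩ ⟨_, hy1, _⟩ ⟨_, _, hy2⟩
    simp only at hy1 hy2
    linarith
  have hm2 : MeasurableSet
      (regionBetween (fun x => x - 1/2) (fun _ => (1/2 : ℝ)) (Set.Ioo (1/2 : ℝ) 1)) :=
    measurableSet_regionBetween (by fun_prop) (by fun_prop) measurableSet_Ioo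
  rw [measure_union hd hm2]
  have hv1 : volume (regionBetween (fun _ => (1/2 : ℝ)) (fun x => x + 1/2)
      (Set.Ioo 0 (1/2))) = ENNReal.ofReal (1/8) := by
    have hg : IntegrableOn (fun x => x + 1/2 : ℝ → ℝ) (Set.Ioo 0 (1/2)) volume :=
      (Continuous.integrableOn_Icc (by continuity)).mono_set Set.Ioo_subset_Icc_self
    have hc : IntegrableOn (fun _ => (1/2 : ℝ)) (Set.Ioo (0:ℝ) (1/2)) volume :=
      integrableOn_const measure_Ioo_lt_top.ne
    rw [Measure.volume_eq_prod, volume_regionBetween_eq_integral hc hg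
      measurableSet_Ioo (fun x hx => by show (1:ℝ)/2 ≤ x + 1/2; linarith [hx.1])]
    congr 1
    have : (∫ y in Set.Ioo (0:ℝ) (1/2), (((fun x => x + 1/2) - fun _ => (1/2:ℝ)) : ℝ → ℝ) y) =
        ∫ y in Set.Ioo (0:ℝ) (1/2), y := by
      apply setIntegral_congr_fun measurableSet_Ioo
      intro y _; simp [Pi.sub_apply]
    rw [this]
    rw [← integral_Ioc_eq_integral_Ioo,
      ← intervalIntegral.integral_of_le (by norm_num : (0:ℝ) ≤ 1/2)]
    simp
    norm_num
  have hv2 : volume (regionBetween (fun x => x - 1/2) (fun _ => (1/2 : ℝ))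
      (Set.Ioo (1/2) 1)) = ENNReal.ofReal (1/8) := by
    have hf : IntegrableOn (fun x => x - 1/2 : ℝ → ℝ) (Set.Ioo (1/2) 1) volume :=
      (Continuous.integrableOn_Icc (by continuity)).mono_set Set.Ioo_subset_Icc_self
    have hc : IntegrableOn (fun _ => (1/2 : ℝ)) (Set.Ioo (1/2:ℝ) 1) volume :=
      integrableOn_const measure_Ioo_lt_top.ne
    rw [Measure.volume_eq_prod, volume_regionBetween_eq_integral hf hc
      measurableSet_Ioo (fun x hx => by show x - 1/2 ≤ (1:ℝ)/2; linarith [hx.2])]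
    congr 1
    have : (∫ y in Set.Ioo (1/2:ℝ) 1, (((fun _ => (1/2:ℝ)) - fun x => x - 1/2) : ℝ → ℝ) y) =
        ∫ y in Set.Ioo (1/2:ℝ) 1, (1 - y) := by
      apply setIntegral_congr_fun measurableSet_Ioo
      intro y _; simp [Pi.sub_apply]; ring
    rw [this]
    rw [← integral_Ioc_eq_integral_Ioo,
      ← intervalIntegral.integral_of_le (by norm_num : (1:ℝ)/2 ≤ 1),
      intervalIntegral.integral_sub intervalIntegrable_const
        (by exact intervalIntegral.intervalIntegrable_id)]
    simp
    norm_num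
  rw [hv1, hv2, ← ENNReal.ofReal_add (by norm_num) (by norm_num)]
  norm_num
  rw [show (1:ℝ)/4 = (4:ℝ)⁻¹ by norm_num, ENNReal.ofReal_inv_of_pos (by norm_num)]
  norm_num
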